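/- Let ν : U → S^{d-1} assign to each point x of a set U ⊂ ℝ^d the outward unit normal of a domain Ω_{T(x)} whose boundary near x is uniformly C^{1,α} (seminorm ≤ C), where the domains Ω_t are increasing in t and x ∈ ∂Ω_{T(x)}. Then ν is Hölder continuous with exponent α/(1+α): |ν(x) - ν(y)| ≤ C'|x-y|^{α/(1+α)} for x, y ∈ U close, with C' depending only on C and α. -/

import Mathlib

open MeasureTheory Metric Set

lemma aux_normbound {E : Type*} [NormedAddCommGroup E] [InnerProductSpace ℝ E]
    (a b : E) (ha : ‖a‖ = 1) (hb : ‖b‖ = 1) (η : ℝ) (hη : 0 ≤ η)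
    (H : ∀ v : E, ‖v‖ = 1 → (inner ℝ v a : ℝ) ≤ 0 → (inner ℝ v b : ℝ) ≤ η) :
    ‖a - b‖ ≤ 3 * η := by
  set c : ℝ := inner ℝ a b with hc
  have haa : (inner ℝ a a : ℝ) = 1 := by
    rw [real_inner_self_eq_norm_sq, ha]; norm_num
  have hbb : (inner ℝ b b : ℝ) = 1 := by
    rw [real_inner_self_eq_norm_sq, hb]; norm_num
  have hc1 : -η ≤ c := by
    have := H (-a) (by simp [ha]) (by simp [haa])
    simp only [inner_neg_left] at this
    linarith
  set w : E := b - c • a with hw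
  have hwa : (inner ℝ w a : ℝ) = 0 := by
    rw [hw, inner_sub_left, real_inner_smul_left, haa, real_inner_comm a b, ← hc]
    ring
  have hwb : (inner ℝ w b : ℝ) = 1 - c ^ 2 := by
    rw [hw, inner_sub_left, real_inner_smul_left, hbb, ← hc]
    ring
  have hww : ‖w‖ ^ 2 = 1 - c ^ 2 := by
    have h1 : (inner ℝ w w : ℝ) = inner ℝ w b - c * inner ℝ w a := by
      nth_rewrite 2 [hw]
      rw [inner_sub_right, real_inner_smul_right]
    rw [← real_inner_self_eq_norm_sq, h1, hwa, hwb]; ring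
  have hwle : ‖w‖ ≤ η := by
    rcases eq_or_ne w 0 with h0 | h0
    · simp [h0, hη]
    · have hwpos : 0 < ‖w‖ := norm_pos_iff.mpr h0
      have hv : ‖(‖w‖⁻¹ • w)‖ = 1 := by
        simp [norm_smul, abs_of_pos (inv_pos.mpr hwpos), inv_mul_cancel₀ hwpos.ne']
      have hva : (inner ℝ (‖w‖⁻¹ • w) a : ℝ) ≤ 0 := by
        simp [real_inner_smul_left, hwa]
      have hvb := H _ hv hva
      rw [real_inner_smul_left, hwb, ← hww] at hvb
      have he : ‖w‖⁻¹ * ‖w‖ ^ 2 = ‖w‖ := by rw [pow_two]; field_simp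
      linarith [hvb, he.symm.le]
  have hnab : ‖a - b‖ ^ 2 = 2 - 2 * c := by
    rw [norm_sub_sq_real, ha, hb, ← hc]; ring
  have hn0 : 0 ≤ ‖a - b‖ := norm_nonneg _
  have hw0 : 0 ≤ ‖w‖ := norm_nonneg _
  have hc2 : 1 - c ^ 2 ≤ η ^ 2 := by nlinarith
  rcases le_or_gt (2/3 : ℝ) η with hcase | hcase
  · have : ‖a - b‖ ≤ 2 := by
      calc ‖a - b‖ ≤ ‖a‖ + ‖b‖ := norm_sub_le _ _
        _ = 2 := by rw [ha, hb]; norm_num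
    linarith
  · have hcpos : 0 < c := by nlinarith
    have hcle : c ≤ 1 := by nlinarith
    nlinarith

lemma key_lemma {E : Type*} [NormedAddCommGroup E] [InnerProductSpace ℝ E]
    (C α : ℝ) (hC : 0 < C) (hα0 : 0 < α)
    (x y νx νy : E) (hνx : ‖νx‖ = 1) (hνy : ‖νy‖ = 1)
    (h₀ : ℝ) (hh₀ : 0 < h₀)
    (A B : Set E) (hAB : A ⊆ B)
    (hintx : ∀ h : ℝ, 0 < h → h < h₀ → ∀ z ∈ Metric.ball x h,
      (inner ℝ (z - x) νx : ℝ) ≤ -(C * h ^ (1 + α)) → z ∈ A)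
    (hexty : ∀ h : ℝ, 0 < h → h < h₀ → ∀ z ∈ Metric.ball y h,
      C * h ^ (1 + α) ≤ (inner ℝ (z - y) νy : ℝ) → z ∉ closure B)
    (hr0 : 0 < dist x y)
    (hrδ1 : dist x y < h₀ ^ (1 + α))
    (hrβ : dist x y ^ (α / (1 + α)) < min (1/2) (1/(4*C)) ) :
    ‖νx - νy‖ ≤ (24 * C + 12) * dist x y ^ (α / (1 + α)) := by
  set r : ℝ := dist x y with hr
  set β : ℝ := α / (1 + α) with hβ
  have h1α : (0:ℝ) < 1 + α := by linarith
  set h : ℝ := r ^ (1/(1+α)) with hh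
  have hhpos : 0 < h := Real.rpow_pos_of_pos hr0 _
  set ε : ℝ := C * r with hε
  set t : ℝ := h / 4 with ht
  have htpos : 0 < t := by positivity
  have hεpos : 0 < ε := by positivity
  set η : ℝ := 4 * (2*C+1) * r ^ β with hη
  have hrβpos : 0 < r ^ β := Real.rpow_pos_of_pos hr0 _
  have hηpos : 0 < η := by positivity
  -- exponent identities
  have hpow : h ^ (1 + α) = r := by
    rw [hh, ← Real.rpow_mul hr0.le, one_div_mul_cancel h1α.ne', Real.rpow_one]
  have hrβh : r ^ β * h = r := by
    rw [hh, hβ, ← Real.rpow_add hr0]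
    have : α / (1 + α) + 1 / (1 + α) = 1 := by
      rw [← add_div, add_comm α 1, div_self h1α.ne']
    rw [this, Real.rpow_one]
  -- size comparisons
  have hr2 : r ^ β < 1/2 := lt_of_lt_of_le hrβ (min_le_left _ _)
  have hr4C : C * r ^ β < 1/4 := by
    have h4 : r ^ β < 1/(4*C) := lt_of_lt_of_le hrβ (min_le_right _ _)
    calc C * r ^ β < C * (1/(4*C)) := by
          exact mul_lt_mul_of_pos_left h4 hC
      _ = 1/4 := by field_simp
  have hrh : r < h / 2 := by
    have := mul_lt_mul_of_pos_right hr2 hhpos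
    rw [hrβh] at this; linarith
  have hεh : ε < h / 4 := by
    have h1 := mul_lt_mul_of_pos_right hr4C hhpos
    have h2 : ε = C * r ^ β * h := by rw [hε, mul_assoc, hrβh]
    linarith
  have hhh₀ : h < h₀ := by
    have h1 : h < (h₀ ^ (1+α)) ^ (1/(1+α)) :=
      Real.rpow_lt_rpow hr0.le hrδ1 (by positivity)
    rwa [← Real.rpow_mul hh₀.le, mul_one_div_cancel h1α.ne', Real.rpow_one] at h1
  -- main step: directional bound
  have HA : ∀ v : E, ‖v‖ = 1 → (inner ℝ v νx : ℝ) ≤ 0 → (inner ℝ v νy : ℝ) ≤ η := by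
    intro v hv hvx
    set z : E := x + t • v - ε • νx with hz
    have hzx : z - x = t • v - ε • νx := by rw [hz]; abel
    have hzxnorm : ‖z - x‖ ≤ t + ε := by
      rw [hzx]
      calc ‖t • v - ε • νx‖ ≤ ‖t • v‖ + ‖ε • νx‖ := norm_sub_le _ _
        _ = t + ε := by
            rw [norm_smul, norm_smul, hv, hνx, Real.norm_eq_abs, Real.norm_eq_abs,
              abs_of_pos htpos, abs_of_pos hεpos]; ring
    have hzball : z ∈ Metric.ball x h := by
      rw [mem_ball, dist_eq_norm]
      calc ‖z - x‖ ≤ t + ε := hzxnorm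
        _ < h/4 + h/4 := by rw [ht]; linarith
        _ ≤ h := by linarith
    have hinx : (inner ℝ (z - x) νx : ℝ) ≤ -(C * h ^ (1+α)) := by
      rw [hzx, inner_sub_left, real_inner_smul_left, real_inner_smul_left,
        real_inner_self_eq_norm_sq, hνx, hpow]
      have : t * (inner ℝ v νx : ℝ) ≤ 0 := mul_nonpos_of_nonneg_of_nonpos htpos.le hvx
      simp only [one_pow, mul_one]
      linarith
    have hzA : z ∈ A := hintx h hhpos hhh₀ z hzball hinx
    have hzB : z ∈ closure B := subset_closure (hAB hzA)
    have hzbally : z ∈ Metric.ball y h := by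
      rw [mem_ball]
      have hd1 : dist z x ≤ t + ε := by rw [dist_eq_norm]; exact hzxnorm
      have hd2 : dist x y = r := hr.symm
      have hteq : t = h / 4 := ht
      calc dist z y ≤ dist z x + dist x y := dist_triangle _ _ _
        _ ≤ (t + ε) + r := by rw [hd2]; linarith
        _ < h := by linarith
    have hcon : (inner ℝ (z - y) νy : ℝ) < C * h ^ (1+α) := by
      by_contra hle
      push_neg at hle
      exact hexty h hhpos hhh₀ z hzbally hle hzB
    rw [hpow] at hcon
    have hzy : z - y = (z - x) + (x - y) := by abel
    have hin1 : (inner ℝ (z - y) νy : ℝ)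
        = t * inner ℝ v νy - ε * inner ℝ νx νy + inner ℝ (x - y) νy := by
      rw [hzy, inner_add_left, hzx, inner_sub_left, real_inner_smul_left,
        real_inner_smul_left]
    have hCS1 : (inner ℝ νx νy : ℝ) ≤ 1 := by
      have := real_inner_le_norm νx νy
      rwa [hνx, hνy, one_mul] at this
    have hCS2 : -r ≤ (inner ℝ (x - y) νy : ℝ) := by
      have h1 : |(inner ℝ (x - y) νy : ℝ)| ≤ ‖x - y‖ * ‖νy‖ := abs_real_inner_le_norm _ _
      rw [hνy, mul_one, ← dist_eq_norm, ← hr] at h1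
      linarith [neg_abs_le (inner ℝ (x - y) νy : ℝ)]
    have hkey : t * (inner ℝ v νy : ℝ) < 2 * ε + r := by
      have : t * (inner ℝ v νy : ℝ) - ε - r < C * r := by
        have h2 : -(ε * (inner ℝ νx νy : ℝ)) ≥ -ε := by nlinarith
        rw [hin1] at hcon; linarith
      rw [hε] at *; linarith
    have htη : t * η = 2 * ε + r := by
      rw [ht, hη, hε]
      have : h / 4 * (4 * (2*C+1) * r ^ β) = (2*C+1) * (r ^ β * h) := by ring
      rw [this, hrβh]; ring
    have := hkey.le
    rw [← htη] at this
    exact le_of_mul_le_mul_left this htpos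
  have := aux_normbound νx νy hνx hνy η hηpos.le HA
  calc ‖νx - νy‖ ≤ 3 * η := this
    _ = (24 * C + 12) * r ^ β := by rw [hη]; ring


/-- Hölder continuity, with exponent `α/(1+α)`, of the outward
unit normal `ν(x)` to the monotone family of domains `Ω_{T(x)}` whose
boundaries are uniformly `C^{1,α}` (in the sense of uniform halfspace
approximation at scale `h` with error `C h^{1+α}`). -/
theorem unit_normal_holder {d : ℕ} (C α : ℝ) (hC : 0 < C) (hα : α ∈ Set.Ioo (0:ℝ) 1) :
    ∃ C' > (0:ℝ),
      ∀ (U : Set (EuclideanSpace ℝ (Fin d)))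
        (Ω : ℝ → Set (EuclideanSpace ℝ (Fin d)))
        (T : EuclideanSpace ℝ (Fin d) → ℝ)
        (ν : EuclideanSpace ℝ (Fin d) → EuclideanSpace ℝ (Fin d)) (h₀ : ℝ),
        0 < h₀ →
        Monotone Ω →
        (∀ x ∈ U, x ∈ frontier (Ω (T x))) →
        (∀ x ∈ U, ‖ν x‖ = 1) →
        (∀ x ∈ U, ∀ h : ℝ, 0 < h → h < h₀ → ∀ z ∈ Metric.ball x h,
          (inner ℝ (z - x) (ν x) : ℝ) ≤ -(C * h ^ (1 + α)) → z ∈ Ω (T x)) →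
        (∀ x ∈ U, ∀ h : ℝ, 0 < h → h < h₀ → ∀ z ∈ Metric.ball x h,
          C * h ^ (1 + α) ≤ (inner ℝ (z - x) (ν x) : ℝ) → z ∉ closure (Ω (T x))) →
        ∃ δ > (0:ℝ), ∀ x ∈ U, ∀ y ∈ U, dist x y < δ →
          ‖ν x - ν y‖ ≤ C' * dist x y ^ (α / (1 + α)) := by
  obtain ⟨hα0, hα1⟩ := hα
  have h1α : (0:ℝ) < 1 + α := by linarith
  have hβpos : (0:ℝ) < α / (1 + α) := by positivity
  refine ⟨24 * C + 12, by linarith, ?_⟩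
  intro U Ω T ν h₀ hh₀ hmono hfr hnorm hint hext
  set m : ℝ := min (1/2 : ℝ) (1/(4*C)) with hm
  have hmpos : 0 < m := lt_min (by norm_num) (by positivity)
  set δ : ℝ := min (h₀ ^ (1 + α)) (m ^ ((1 + α)/α)) with hδ
  have hδpos : 0 < δ :=
    lt_min (Real.rpow_pos_of_pos hh₀ _) (Real.rpow_pos_of_pos hmpos _)
  refine ⟨δ, hδpos, ?_⟩
  intro x hx y hy hxy
  rcases eq_or_ne x y with rfl | hne
  · simp [Real.zero_rpow hβpos.ne']
  have hr0 : 0 < dist x y := dist_pos.mpr hne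
  have hrδ1 : dist x y < h₀ ^ (1 + α) := lt_of_lt_of_le hxy (min_le_left _ _)
  have hrβ : dist x y ^ (α / (1 + α)) < m := by
    have h1 : dist x y < m ^ ((1 + α)/α) := lt_of_lt_of_le hxy (min_le_right _ _)
    have h2 := Real.rpow_lt_rpow dist_nonneg h1 hβpos
    rwa [← Real.rpow_mul hmpos.le,
      show (1 + α)/α * (α / (1 + α)) = 1 by field_simp,
      Real.rpow_one] at h2
  rcases le_total (T x) (T y) with hT | hT
  · exact key_lemma C α hC hα0 x y (ν x) (ν y) (hnorm x hx) (hnorm y hy) h₀ hh₀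
      (Ω (T x)) (Ω (T y)) (hmono hT) (hint x hx) (hext y hy) hr0 hrδ1 hrβ
  · have := key_lemma C α hC hα0 y x (ν y) (ν x) (hnorm y hy) (hnorm x hx) h₀ hh₀
      (Ω (T y)) (Ω (T x)) (hmono hT) (hint y hy) (hext x hx)
      (by rwa [dist_comm]) (by rwa [dist_comm]) (by rwa [dist_comm])
    rwa [norm_sub_rev, dist_comm y x] at this
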